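/- If p lies in the topological closure of the discrete exponential family E_A, then the support of p is a facial set of the convex support polytope P_A. -/

import Mathlib

/-- The discrete exponential family `E_A` as a set of distributions on `I`. -/
noncomputable def expFam {I J : Type} [Fintype I] [Fintype J] (A : J → I → ℝ) :
    Set (I → ℝ) :=
  {q | ∃ θ : J → ℝ, q = fun i =>
    Real.exp (∑ j, θ j * A j i - Real.log (∑ i', Real.exp (∑ j, θ j * A j i')))}


open Filter Topology Real

local notation "⟪" x ", " y "⟫" => @inner ℝ _ _ x y

lemma aux_key {J : Type} [Fintype J] {ι : Type} (v : ι → EuclideanSpace ℝ J) (B : Finset ι)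
    (K : Finset ι) :
    ∀ (θ : ℕ → EuclideanSpace ℝ J),
    (∀ i ∈ B, ∃ C : ℝ, ∀ n, |⟪θ n, v i⟫| ≤ C) →
    (∀ i ∈ K, Tendsto (fun n => ⟪θ n, v i⟫) atTop atBot) →
    ∃ g : EuclideanSpace ℝ J, (∀ i ∈ B, ⟪g, v i⟫ = 0) ∧ ∀ i ∈ K, ⟪g, v i⟫ < 0 := by
  classical
  induction K using Finset.strongInduction with
  | _ K ih =>
    intro θ hB hK
    rcases K.eq_empty_or_nonempty with rfl | ⟨i1, hi1⟩
    · exact ⟨0, fun i _ => inner_zero_left _, fun i hi => absurd hi (by simp)⟩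
    -- setup
    set S : Set (EuclideanSpace ℝ J) := v '' (↑B ∪ ↑K) with hS
    set E : Submodule ℝ (EuclideanSpace ℝ J) := Submodule.span ℝ S with hE
    have hvE : ∀ i, i ∈ B ∨ i ∈ K → v i ∈ E := by
      intro i hi
      exact Submodule.subset_span ⟨i, by simpa using hi, rfl⟩
    set ψ : ℕ → EuclideanSpace ℝ J := fun n => (E.orthogonalProjection (θ n) : EuclideanSpace ℝ J) with hψ
    have hψE : ∀ n, ψ n ∈ E := fun n => (E.orthogonalProjection (θ n)).2
    have hinner : ∀ n, ∀ x ∈ E, ⟪θ n, x⟫ = ⟪ψ n, x⟫ := by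
      intro n x hx
      have h := Submodule.sub_starProjection_mem_orthogonal (K := E) (θ n)
      have h1 := (Submodule.mem_orthogonal E (θ n - ψ n)).mp h x hx
      have h2 : ⟪θ n - ψ n, x⟫ = 0 := by rw [real_inner_comm]; exact h1
      rw [inner_sub_left] at h2
      linarith
    -- v i1 ≠ 0
    have hvi1 : v i1 ≠ 0 := by
      intro h0
      have ht := hK i1 hi1
      rw [h0] at ht
      simp only [inner_zero_right] at ht
      rcases (ht.eventually (eventually_le_atBot (-1 : ℝ))).exists with ⟨n, hn⟩
      norm_num at hn
    have hvi1pos : (0:ℝ) < ‖v i1‖ := norm_pos_iff.mpr hvi1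
    -- ‖ψ n‖ → ∞
    have hψtop : Tendsto (fun n => ‖ψ n‖) atTop atTop := by
      have h1 : Tendsto (fun n => |⟪θ n, v i1⟫| / ‖v i1‖) atTop atTop :=
        (tendsto_abs_atBot_atTop.comp (hK i1 hi1)).atTop_div_const hvi1pos
      apply tendsto_atTop_mono _ h1
      intro n
      rw [div_le_iff₀ hvi1pos]
      calc |⟪θ n, v i1⟫| = |⟪ψ n, v i1⟫| := by rw [hinner n _ (hvE i1 (Or.inr hi1))]
        _ ≤ ‖ψ n‖ * ‖v i1‖ := abs_real_inner_le_norm _ _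
    -- unit vectors and limit point g0
    set u : ℕ → EuclideanSpace ℝ J := fun n => ‖ψ n‖⁻¹ • ψ n with hu
    have humem : ∀ n, u n ∈ Metric.closedBall (0 : EuclideanSpace ℝ J) 1 := by
      intro n
      rw [Metric.mem_closedBall, dist_zero_right, hu]
      simp only [norm_smul, norm_inv, norm_norm]
      rcases eq_or_ne (‖ψ n‖) 0 with h | h
      · simp [h]
      · rw [inv_mul_cancel₀ h]
    obtain ⟨g0, hg0mem, φ, hφ, hconv⟩ :=
      (isCompact_closedBall (0 : EuclideanSpace ℝ J) 1).tendsto_subseq humem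
    have hψφtop : Tendsto (fun k => ‖ψ (φ k)‖) atTop atTop := hψtop.comp hφ.tendsto_atTop
    -- ‖g0‖ = 1
    have hg0norm : ‖g0‖ = 1 := by
      have h1 : Tendsto (fun k => ‖u (φ k)‖) atTop (𝓝 ‖g0‖) := hconv.norm
      have h2 : ∀ᶠ k in atTop, ‖u (φ k)‖ = 1 := by
        filter_upwards [hψφtop.eventually (eventually_ge_atTop (1:ℝ))] with k hk
        have hne : ‖ψ (φ k)‖ ≠ 0 := by linarith
        simp only [hu, norm_smul, norm_inv, norm_norm]
        rw [inv_mul_cancel₀ hne]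
      exact tendsto_nhds_unique (h1.congr' h2) tendsto_const_nhds
    -- inner products with g0
    have huin : ∀ i, i ∈ B ∨ i ∈ K →
        ∀ n, ⟪u n, v i⟫ = ‖ψ n‖⁻¹ * ⟪θ n, v i⟫ := by
      intro i hi n
      rw [hu]
      simp only [real_inner_smul_left]
      rw [hinner n _ (hvE i hi)]
    have hlim : ∀ i, Tendsto (fun k => ⟪u (φ k), v i⟫) atTop (𝓝 ⟪g0, v i⟫) :=
      fun i => hconv.inner tendsto_const_nhds
    have hinv0 : Tendsto (fun k => ‖ψ (φ k)‖⁻¹) atTop (𝓝 0) :=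
      tendsto_inv_atTop_zero.comp hψφtop
    have hg0B : ∀ i ∈ B, ⟪g0, v i⟫ = 0 := by
      intro i hi
      obtain ⟨C, hC⟩ := hB i hi
      have hz : Tendsto (fun k => ⟪u (φ k), v i⟫) atTop (𝓝 0) := by
        apply squeeze_zero_norm (a := fun k => ‖ψ (φ k)‖⁻¹ * C)
        · intro k
          rw [huin i (Or.inl hi)]
          rw [Real.norm_eq_abs, abs_mul, abs_inv, abs_norm]
          exact mul_le_mul_of_nonneg_left (hC (φ k)) (by positivity)
        · simpa using hinv0.mul_const C
      exact tendsto_nhds_unique (hlim i) hz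
    have hg0K : ∀ i ∈ K, ⟪g0, v i⟫ ≤ 0 := by
      intro i hi
      apply le_of_tendsto (hlim i)
      have hev : ∀ᶠ n in atTop, ⟪θ n, v i⟫ ≤ 0 := (hK i hi).eventually (eventually_le_atBot 0)
      filter_upwards [hφ.tendsto_atTop.eventually hev] with k hk
      rw [huin i (Or.inr hi)]
      exact mul_nonpos_of_nonneg_of_nonpos (by positivity) hk
    -- g0 ∈ E
    have hg0E : g0 ∈ E := by
      have hclosed : IsClosed (E : Set (EuclideanSpace ℝ J)) := E.closed_of_finiteDimensional
      exact hclosed.mem_of_tendsto hconv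
        (Eventually.of_forall fun k => E.smul_mem _ (hψE (φ k)))
    -- some i ∈ K has strict inequality
    have hexK : ∃ i ∈ K, ⟪g0, v i⟫ ≠ 0 := by
      by_contra hcon
      push_neg at hcon
      have hperp : ∀ x ∈ E, ⟪x, g0⟫ = 0 := by
        intro x hx
        induction hx using Submodule.span_induction with
        | mem x hxS =>
          obtain ⟨i, hi, rfl⟩ := hxS
          rw [real_inner_comm]
          rcases hi with hi | hi
          · exact hg0B i hi
          · exact hcon i hi
        | zero => exact inner_zero_left _
        | add x y hx hy hx' hy' => rw [inner_add_left, hx', hy', add_zero]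
        | smul a x hx hx' => rw [real_inner_smul_left, hx', mul_zero]
      have : ⟪g0, g0⟫ = (0:ℝ) := hperp g0 hg0E
      rw [inner_self_eq_zero] at this
      rw [this] at hg0norm
      simp at hg0norm
    obtain ⟨i2, hi2K, hi2ne⟩ := hexK
    -- smaller set K'
    set K' : Finset ι := K.filter (fun i => ⟪g0, v i⟫ = 0) with hK'
    have hK'ss : K' ⊂ K := by
      refine Finset.ssubset_iff_of_subset (Finset.filter_subset _ _) |>.mpr ?_
      exact ⟨i2, hi2K, fun h => hi2ne (Finset.mem_filter.mp h).2⟩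
    obtain ⟨g1, hg1B, hg1K'⟩ := ih K' hK'ss (fun n => θ (φ n))
      (fun i hi => ⟨(hB i hi).choose, fun n => (hB i hi).choose_spec (φ n)⟩)
      (fun i hi => (hK i (Finset.filter_subset _ _ hi)).comp hφ.tendsto_atTop)
    -- combine
    set T : Finset ι := K \ K' with hT
    have hTneg : ∀ i ∈ T, ⟪g0, v i⟫ < 0 := by
      intro i hi
      rw [hT, Finset.mem_sdiff] at hi
      have h1 := hg0K i hi.1
      have h2 : ⟪g0, v i⟫ ≠ 0 := by
        intro h
        exact hi.2 (Finset.mem_filter.mpr ⟨hi.1, h⟩)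
      exact lt_of_le_of_ne h1 h2
    have hTne : T.Nonempty := ⟨i2, by
      rw [hT, Finset.mem_sdiff]
      exact ⟨hi2K, fun h => hi2ne (Finset.mem_filter.mp h).2⟩⟩
    set C : ℝ := T.sup' hTne (fun i => ⟪g1, v i⟫ / (-⟪g0, v i⟫)) + 1 with hC
    refine ⟨g1 + C • g0, ?_, ?_⟩
    · intro i hi
      rw [inner_add_left, real_inner_smul_left, hg1B i hi, hg0B i hi]
      ring
    · intro i hi
      rw [inner_add_left, real_inner_smul_left]
      by_cases hiK' : i ∈ K'
      · have h0 : ⟪g0, v i⟫ = 0 := (Finset.mem_filter.mp hiK').2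
        rw [h0, mul_zero, add_zero]
        exact hg1K' i hiK'
      · have hiT : i ∈ T := by rw [hT, Finset.mem_sdiff]; exact ⟨hi, hiK'⟩
        have hneg := hTneg i hiT
        have hCgt : ⟪g1, v i⟫ / (-⟪g0, v i⟫) < C := by
          rw [hC]
          have := Finset.le_sup' (fun i => ⟪g1, v i⟫ / (-⟪g0, v i⟫)) hiT
          linarith
        rw [div_lt_iff₀ (by linarith)] at hCgt
        nlinarith

/-- If `p` lies in the topological closure (pointwise convergence) of the
discrete exponential family `E_A`, then the support of `p` is a facial set of
`P_A = conv{f_i}`, i.e. it is the set of maximizers of some linear functional `g`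
over the columns `f_i`. -/
theorem support_facial_of_mem_closure {I J : Type} [Fintype I] [Fintype J] [Nonempty I]
    (A : J → I → ℝ) (p : I → ℝ) (hp : p ∈ closure (expFam A)) :
    ∃ g : J → ℝ, ∀ i, p i ≠ 0 ↔ ∀ i', ∑ j, g j * A j i' ≤ ∑ j, g j * A j i := by
  classical
  obtain ⟨q, hqmem, hqtend⟩ := mem_closure_iff_seq_limit.mp hp
  choose θ hθ using hqmem
  set Z : ℕ → ℝ := fun n => ∑ i', Real.exp (∑ j, θ n j * A j i') with hZ
  have hZpos : ∀ n, 0 < Z n :=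
    fun n => Finset.sum_pos (fun i _ => Real.exp_pos _) Finset.univ_nonempty
  have hq : ∀ n i, q n i = Real.exp (∑ j, θ n j * A j i - Real.log (Z n)) := by
    intro n i; rw [hθ n]
  have hqpos : ∀ n i, 0 < q n i := fun n i => by rw [hq]; exact Real.exp_pos _
  have hlogq : ∀ n i, Real.log (q n i) = ∑ j, θ n j * A j i - Real.log (Z n) := by
    intro n i; rw [hq, Real.log_exp]
  have hti : ∀ i, Tendsto (fun n => q n i) atTop (𝓝 (p i)) := tendsto_pi_nhds.mp hqtend
  have hpnn : ∀ i, 0 ≤ p i := fun i => ge_of_tendsto' (hti i) (fun n => (hqpos n i).le)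
  have hsum1 : ∀ n, ∑ i, q n i = 1 := by
    intro n
    have : ∑ i, q n i = (∑ i, Real.exp (∑ j, θ n j * A j i)) / Z n := by
      rw [Finset.sum_div]
      refine Finset.sum_congr rfl fun i _ => ?_
      rw [hq, Real.exp_sub, Real.exp_log (hZpos n)]
    rw [this, hZ, div_self (hZpos n).ne']
  have hpsum : ∑ i, p i = 1 := by
    have h1 : Tendsto (fun n => ∑ i, q n i) atTop (𝓝 (∑ i, p i)) :=
      tendsto_finset_sum _ (fun i _ => hti i)
    have h2 : Tendsto (fun n => ∑ i, q n i) atTop (𝓝 1) := by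
      simp only [hsum1]; exact tendsto_const_nhds
    exact tendsto_nhds_unique h1 h2
  have hex : ∃ i0, p i0 ≠ 0 := by
    by_contra hcon
    push_neg at hcon
    rw [Finset.sum_congr rfl (fun i _ => hcon i), Finset.sum_const, smul_zero] at hpsum
    norm_num at hpsum
  obtain ⟨i0, hi0⟩ := hex
  have hi0pos : 0 < p i0 := lt_of_le_of_ne (hpnn i0) (Ne.symm hi0)
  -- log limits
  have hlog : ∀ i, p i ≠ 0 →
      Tendsto (fun n => Real.log (q n i)) atTop (𝓝 (Real.log (p i))) :=
    fun i hi => (Real.continuousAt_log hi).tendsto.comp (hti i)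
  have hlogbot : ∀ i, p i = 0 → Tendsto (fun n => Real.log (q n i)) atTop atBot := by
    intro i hi
    have h1 : Tendsto (fun n => q n i) atTop (𝓝[≠] (0:ℝ)) := by
      apply tendsto_nhdsWithin_of_tendsto_nhds_of_eventually_within _ (hi ▸ hti i)
      exact Eventually.of_forall fun n => (hqpos n i).ne'
    exact Real.tendsto_log_nhdsNE_zero.comp h1
  -- vectors
  set v : I → EuclideanSpace ℝ J :=
    fun i => (WithLp.equiv 2 (∀ _ : J, ℝ)).symm (fun j => A j i - A j i0) with hv
  set Θ : ℕ → EuclideanSpace ℝ J :=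
    fun n => (WithLp.equiv 2 (∀ _ : J, ℝ)).symm (θ n) with hΘ
  have hip : ∀ (x : EuclideanSpace ℝ J) i,
      (inner ℝ x (v i) : ℝ) = (∑ j, x j * A j i) - ∑ j, x j * A j i0 := by
    intro x i
    rw [← Finset.sum_sub_distrib]
    simp only [PiLp.inner_apply, RCLike.inner_apply, conj_trivial, hv,
      WithLp.equiv_symm_apply, PiLp.toLp_apply]
    exact Finset.sum_congr rfl fun j _ => by ring
  have hΘin : ∀ n i, (inner ℝ (Θ n) (v i) : ℝ) = Real.log (q n i) - Real.log (q n i0) := by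
    intro n i
    rw [hip, hlogq, hlogq]
    simp only [hΘ, WithLp.equiv_symm_apply, PiLp.toLp_apply]
    ring
  set B : Finset I := Finset.univ.filter (fun i => p i ≠ 0) with hBdef
  set K : Finset I := Finset.univ.filter (fun i => p i = 0) with hKdef
  have hBh : ∀ i ∈ B, ∃ C : ℝ, ∀ n, |(inner ℝ (Θ n) (v i) : ℝ)| ≤ C := by
    intro i hi
    have hpi : p i ≠ 0 := (Finset.mem_filter.mp hi).2
    have h1 : Tendsto (fun n => (inner ℝ (Θ n) (v i) : ℝ)) atTop
        (𝓝 (Real.log (p i) - Real.log (p i0))) := by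
      simp only [hΘin]
      exact (hlog i hpi).sub (hlog i0 hi0)
    have h2 := h1.abs.bddAbove_range
    obtain ⟨C, hC⟩ := h2
    exact ⟨C, fun n => hC (Set.mem_range_self n)⟩
  have hKh : ∀ i ∈ K, Tendsto (fun n => (inner ℝ (Θ n) (v i) : ℝ)) atTop atBot := by
    intro i hi
    have hpi : p i = 0 := (Finset.mem_filter.mp hi).2
    have h1 : Tendsto (fun n => -Real.log (q n i0) + Real.log (q n i)) atTop atBot :=
      Tendsto.add_atBot ((hlog i0 hi0).neg) (hlogbot i hpi)
    apply h1.congr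
    intro n
    rw [hΘin]; ring
  obtain ⟨g, hgB, hgK⟩ := aux_key v B K Θ hBh hKh
  refine ⟨fun j => g j, fun i => ?_⟩
  have key1 : ∀ i, p i ≠ 0 → (∑ j, g j * A j i) = ∑ j, g j * A j i0 := by
    intro i hi
    have := hgB i (Finset.mem_filter.mpr ⟨Finset.mem_univ i, hi⟩)
    rw [hip] at this
    linarith
  have key2 : ∀ i, p i = 0 → (∑ j, g j * A j i) < ∑ j, g j * A j i0 := by
    intro i hi
    have := hgK i (Finset.mem_filter.mpr ⟨Finset.mem_univ i, hi⟩)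
    rw [hip] at this
    linarith
  constructor
  · intro hi i'
    rw [key1 i hi]
    rcases eq_or_ne (p i') 0 with h | h
    · exact (key2 i' h).le
    · exact (key1 i' h).le
  · intro hmax
    intro hpi
    have h1 := hmax i0
    have h2 := key2 i hpi
    linarith
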